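/- Let D ⊆ ℝ^d be a convex set and let G : ℝ^d → ℝ^n be differentiable on D with derivative (Jacobian) DG. Suppose there are constants 0 < ι ≤ κ and M ≥ 0 such that for all z, z' ∈ D: (i) ι‖z − z'‖ ≤ ‖G(z) − G(z')‖ ≤ κ‖z − z'‖, and (ii) ‖DG(z) − DG(z')‖ ≤ M‖z − z'‖ in operator norm. Then for all z, z' ∈ D, the inner product ⟨G(z) − G(z'), DG(z)(z − z')⟩ ≥ ι²‖z − z'‖² − (κM/2)‖z − z'‖³. Consequently, if D has diameter at most Δ, then ⟨G(z) − G(z'), DG(z)(z − z')⟩ ≥ (ι² − κMΔ/2)‖z − z'‖² for all z, z' ∈ D. -/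

import Mathlib

open scoped RealInnerProductSpace

open Set in
lemma taylor_remainder_bound
    {d n : ℕ} (D : Set (EuclideanSpace ℝ (Fin d))) (hD : Convex ℝ D)
    (G : EuclideanSpace ℝ (Fin d) → EuclideanSpace ℝ (Fin n))
    (DG : EuclideanSpace ℝ (Fin d) →
      (EuclideanSpace ℝ (Fin d) →L[ℝ] EuclideanSpace ℝ (Fin n)))
    (hdiff : ∀ z ∈ D, HasFDerivWithinAt G (DG z) D z)
    (M : ℝ)
    (hlipJ : ∀ z ∈ D, ∀ z' ∈ D, ‖DG z - DG z'‖ ≤ M * ‖z - z'‖)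
    {z z' : EuclideanSpace ℝ (Fin d)} (hz : z ∈ D) (hz' : z' ∈ D) :
    ‖G z' - G z - DG z (z' - z)‖ ≤ M / 2 * ‖z' - z‖ ^ 2 := by
  set v := z' - z with hv
  set c : ℝ → EuclideanSpace ℝ (Fin d) := fun t => z + t • v with hc
  have hmem : ∀ t ∈ Icc (0:ℝ) 1, c t ∈ D := fun t ht =>
    hD.add_smul_sub_mem hz hz' ht
  have hmaps : MapsTo c (Icc (0:ℝ) 1) D := fun t ht => hmem t ht
  set f : ℝ → EuclideanSpace ℝ (Fin n) := fun t => G (c t) - t • (DG z v) with hf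
  have hderiv : ∀ t ∈ Icc (0:ℝ) 1,
      HasDerivWithinAt f (DG (c t) v - DG z v) (Icc 0 1) t := by
    intro t ht
    have hct : HasDerivWithinAt c v (Icc 0 1) t := by
      have : HasDerivAt (fun t : ℝ => z + t • v) v t := by
        simpa using ((hasDerivAt_id t).smul_const v).const_add z
      exact this.hasDerivWithinAt
    have h1 : HasDerivWithinAt (fun t => G (c t)) (DG (c t) v) (Icc 0 1) t :=
      (hdiff (c t) (hmem t ht)).comp_hasDerivWithinAt t hct hmaps
    have h2 : HasDerivWithinAt (fun t : ℝ => t • (DG z v)) (DG z v) (Icc 0 1) t := by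
      simpa using ((hasDerivAt_id t).smul_const (DG z v)).hasDerivWithinAt
    exact h1.sub h2
  set g : ℝ → EuclideanSpace ℝ (Fin n) := fun t => f t - f 0 with hg
  have hcont : ContinuousOn g (Icc 0 1) := by
    intro t ht
    exact ((hderiv t ht).continuousWithinAt.sub continuousWithinAt_const)
  have hg' : ∀ t ∈ Ico (0:ℝ) 1,
      HasDerivWithinAt g (DG (c t) v - DG z v) (Ici t) t := by
    intro t ht
    have := ((hderiv t (Ico_subset_Icc_self ht)).sub
      (hasDerivWithinAt_const t (Icc 0 1) (f 0)))
    have h2 : Icc (0:ℝ) 1 ∈ nhdsWithin t (Ici t) :=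
      Icc_mem_nhdsGE_of_mem ht
    have h3 := this.mono_of_mem_nhdsWithin h2
    rw [sub_zero] at h3
    exact h3
  have hB : ∀ x : ℝ, HasDerivAt (fun t : ℝ => M * ‖v‖ ^ 2 * t ^ 2 / 2)
      (M * ‖v‖ ^ 2 * x) x := by
    intro x
    have := ((hasDerivAt_pow 2 x).const_mul (M * ‖v‖ ^ 2)).div_const 2
    refine this.congr_deriv ?_
    ring
  have hbound : ∀ t ∈ Ico (0:ℝ) 1, ‖DG (c t) v - DG z v‖ ≤ M * ‖v‖ ^ 2 * t := by
    intro t ht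
    have h1 : ‖DG (c t) v - DG z v‖ ≤ ‖DG (c t) - DG z‖ * ‖v‖ := by
      have := (DG (c t) - DG z).le_opNorm v
      simpa using this
    have h2 : ‖DG (c t) - DG z‖ ≤ M * ‖c t - z‖ :=
      hlipJ (c t) (hmem t (Ico_subset_Icc_self ht)) z hz
    have h3 : ‖c t - z‖ = t * ‖v‖ := by
      simp [hc, norm_smul, abs_of_nonneg ht.1]
    calc ‖DG (c t) v - DG z v‖ ≤ ‖DG (c t) - DG z‖ * ‖v‖ := h1
      _ ≤ M * ‖c t - z‖ * ‖v‖ := by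
          apply mul_le_mul_of_nonneg_right h2 (norm_nonneg _)
      _ = M * ‖v‖ ^ 2 * t := by rw [h3]; ring
  have key := image_norm_le_of_norm_deriv_right_le_deriv_boundary hcont hg'
    (by simp [hg]) hB hbound (right_mem_Icc.2 zero_le_one)
  have h1 : g 1 = G z' - G z - DG z v := by
    simp only [hg, hf, hc]
    have : z + (1:ℝ) • v = z' := by simp [hv]
    rw [this]
    simp
    abel
  rw [h1] at key
  calc ‖G z' - G z - DG z (z' - z)‖ ≤ M * ‖v‖ ^ 2 * 1 ^ 2 / 2 := key
    _ = M / 2 * ‖z' - z‖ ^ 2 := by rw [← hv]; ring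

/-- Strong smoothness of a near-isometric generator with Lipschitz Jacobian. -/
theorem strong_smoothness_of_near_isometry
    {d n : ℕ} (D : Set (EuclideanSpace ℝ (Fin d))) (hD : Convex ℝ D)
    (G : EuclideanSpace ℝ (Fin d) → EuclideanSpace ℝ (Fin n))
    (DG : EuclideanSpace ℝ (Fin d) →
      (EuclideanSpace ℝ (Fin d) →L[ℝ] EuclideanSpace ℝ (Fin n)))
    (hdiff : ∀ z ∈ D, HasFDerivWithinAt G (DG z) D z)
    (ι κ M : ℝ) (hι : 0 < ι) (hικ : ι ≤ κ) (hM : 0 ≤ M)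
    (hiso : ∀ z ∈ D, ∀ z' ∈ D,
      ι * ‖z - z'‖ ≤ ‖G z - G z'‖ ∧ ‖G z - G z'‖ ≤ κ * ‖z - z'‖)
    (hlipJ : ∀ z ∈ D, ∀ z' ∈ D, ‖DG z - DG z'‖ ≤ M * ‖z - z'‖) :
    (∀ z ∈ D, ∀ z' ∈ D,
      ⟪G z - G z', DG z (z - z')⟫ ≥
        ι ^ 2 * ‖z - z'‖ ^ 2 - (κ * M / 2) * ‖z - z'‖ ^ 3) ∧
    (∀ Δ : ℝ, (∀ x ∈ D, ∀ y ∈ D, ‖x - y‖ ≤ Δ) →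
      ∀ z ∈ D, ∀ z' ∈ D,
        ⟪G z - G z', DG z (z - z')⟫ ≥
          (ι ^ 2 - κ * M * Δ / 2) * ‖z - z'‖ ^ 2) := by
  have main : ∀ z ∈ D, ∀ z' ∈ D,
      ⟪G z - G z', DG z (z - z')⟫ ≥
        ι ^ 2 * ‖z - z'‖ ^ 2 - (κ * M / 2) * ‖z - z'‖ ^ 3 := by
    intro z hz z' hz'
    have hrem := taylor_remainder_bound D hD G DG hdiff M hlipJ hz hz'
    set u : EuclideanSpace ℝ (Fin n) := G z - G z' with hu
    set r : EuclideanSpace ℝ (Fin n) := G z' - G z - DG z (z' - z) with hr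
    have heq : DG z (z - z') = u + r := by
      have : DG z (z - z') = -(DG z (z' - z)) := by
        rw [← map_neg]; congr 1; abel
      rw [this, hu, hr]; abel
    have hnr : ‖r‖ ≤ M / 2 * ‖z - z'‖ ^ 2 := by
      rw [hr]
      have : ‖z' - z‖ = ‖z - z'‖ := norm_sub_rev _ _
      rw [← this]; exact hrem
    have hinner : ⟪u, DG z (z - z')⟫ = ‖u‖ ^ 2 + ⟪u, r⟫ := by
      rw [heq, inner_add_right, real_inner_self_eq_norm_sq]
    have h1 : ι * ‖z - z'‖ ≤ ‖u‖ := (hiso z hz z' hz').1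
    have h2 : ‖u‖ ≤ κ * ‖z - z'‖ := (hiso z hz z' hz').2
    have hlow : ι ^ 2 * ‖z - z'‖ ^ 2 ≤ ‖u‖ ^ 2 := by
      have := mul_le_mul h1 h1 (by positivity) (norm_nonneg _)
      nlinarith [norm_nonneg u]
    have hcross : |⟪u, r⟫| ≤ κ * M / 2 * ‖z - z'‖ ^ 3 := by
      calc |⟪u, r⟫| ≤ ‖u‖ * ‖r‖ := abs_real_inner_le_norm u r
        _ ≤ (κ * ‖z - z'‖) * (M / 2 * ‖z - z'‖ ^ 2) := by
            exact mul_le_mul h2 hnr (norm_nonneg _)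
              (mul_nonneg (le_trans hι.le hικ) (norm_nonneg _))
        _ = κ * M / 2 * ‖z - z'‖ ^ 3 := by ring
    have := abs_le.1 hcross
    rw [ge_iff_le, hinner]
    nlinarith [hlow]
  refine ⟨main, ?_⟩
  intro Δ hΔ z hz z' hz'
  have h := main z hz z' hz'
  have hd : ‖z - z'‖ ≤ Δ := hΔ z hz z' hz'
  have hκM : 0 ≤ κ * M := mul_nonneg (le_trans hι.le hικ) hM
  have : κ * M / 2 * ‖z - z'‖ ^ 3 ≤ κ * M * Δ / 2 * ‖z - z'‖ ^ 2 := by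
    calc κ * M / 2 * ‖z - z'‖ ^ 3 = κ * M / 2 * (‖z - z'‖ * ‖z - z'‖ ^ 2) := by ring
      _ ≤ κ * M / 2 * (Δ * ‖z - z'‖ ^ 2) := by
          exact mul_le_mul_of_nonneg_left
            (mul_le_mul_of_nonneg_right hd (sq_nonneg _)) (by linarith)
      _ = κ * M * Δ / 2 * ‖z - z'‖ ^ 2 := by ring
  rw [ge_iff_le] at h ⊢
  nlinarith
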